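/- For every h ∈ C₀^∞(ℝⁿ) and every a > 0, the following inequality holds: ∫_{ℝⁿ} (|x|²/(8a)) h(x)² e^{-|x|²/(4a)} dx ≤ 2a ∫_{ℝⁿ} |∇h(x)|² e^{-|x|²/(4a)} dx + (n/2) ∫_{ℝⁿ} h(x)² e^{-|x|²/(4a)} dx. -/

import Mathlib

open MeasureTheory Set Filter

noncomputable section

abbrev Eu (n : ℕ) : Type := EuclideanSpace ℝ (Fin n)

/-- `i`-th spatial partial derivative. -/
noncomputable def pd (n : ℕ) (i : Fin n) (f : Eu n → ℝ) (x : Eu n) : ℝ :=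
  fderiv ℝ f x (EuclideanSpace.single i 1)

/-- Spatial divergence `div (A ∇u)` for a time-dependent coefficient matrix. -/
noncomputable def divAGrad (n : ℕ) (A : Eu n → ℝ → Matrix (Fin n) (Fin n) ℝ)
    (u : Eu n → ℝ → ℝ) (x : Eu n) (t : ℝ) : ℝ :=
  ∑ i, pd n i (fun y => ∑ j, A y t i j * pd n j (fun z => u z t) y) x

/-- Squared Frobenius norm of the spatial Hessian. -/
noncomputable def hessSq (n : ℕ) (w : Eu n → ℝ → ℝ) (x : Eu n) (t : ℝ) : ℝ :=
  ∑ i, ∑ j, (pd n i (fun y => pd n j (fun z => w z t) y) x) ^ 2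

/-- Symmetry, uniform ellipticity and space-time (parabolic) Lipschitz regularity of `A`. -/
def IsEllipLip (n : ℕ) (Λ K : ℝ) (A : Eu n → ℝ → Matrix (Fin n) (Fin n) ℝ) : Prop :=
  (∀ x t, (A x t).IsSymm) ∧
  (∀ (x : Eu n) (t : ℝ) (ξ : Eu n),
      Λ⁻¹ * ‖ξ‖ ^ 2 ≤ ∑ i, ∑ j, A x t i j * ξ i * ξ j ∧
        ∑ i, ∑ j, A x t i j * ξ i * ξ j ≤ Λ * ‖ξ‖ ^ 2) ∧
  (∀ (x y : Eu n) (t s : ℝ) (i j : Fin n),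
      |A x t i j - A y s i j| ≤ K * (‖x - y‖ + |t - s| ^ ((1:ℝ)/2)))

/-- The weight `θ(t) = t^{1/2} (log(1/t))^{3/2}`. -/
noncomputable def thetaFn (t : ℝ) : ℝ := t ^ ((1:ℝ)/2) * (Real.log (1/t)) ^ ((3:ℝ)/2)

/-- Gaussian kernel `G(x,t) = t^{-n/2} e^{-|x|²/(4t)}`. -/
noncomputable def Gk (n : ℕ) (x : Eu n) (t : ℝ) : ℝ :=
  t ^ (-(n:ℝ)/2) * Real.exp (-‖x‖ ^ 2 / (4 * t))

/-- The function `σ` (with derivative `σ'`) solving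
`(d/dt) log (σ/(t σ')) = θ(λ t)/t`, `σ(0) = 0`, `σ'(0) = 1` on `[0, 1/λ]`. -/
def SigmaODE (lam : ℝ) (σ σ' : ℝ → ℝ) : Prop :=
  σ 0 = 0 ∧ σ' 0 = 1 ∧
  ContinuousOn σ' (Icc 0 (1/lam)) ∧
  (∀ t ∈ Icc (0:ℝ) (1/lam), HasDerivWithinAt σ (σ' t) (Icc 0 (1/lam)) t) ∧
  (∀ t ∈ Ioc (0:ℝ) (1/lam), 0 < σ t ∧ 0 < σ' t) ∧
  (∀ t ∈ Ioc (0:ℝ) (1/lam),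
    HasDerivWithinAt (fun s => Real.log (σ s) - Real.log s - Real.log (σ' s))
      (thetaFn (lam * t) / t) (Icc 0 (1/lam)) t)

/-- Smooth functions compactly supported in `S × [0, T)`. -/
def TestFn (n : ℕ) (S : Set (Eu n)) (T : ℝ) (w : Eu n → ℝ → ℝ) : Prop :=
  ContDiff ℝ (⊤ : ℕ∞) (fun p : Eu n × ℝ => w p.1 p.2) ∧
  HasCompactSupport (fun p : Eu n × ℝ => w p.1 p.2) ∧
  tsupport (fun p : Eu n × ℝ => w p.1 p.2) ⊆ S ×ˢ Ico 0 T

/-- `‖V‖_{L^∞(Q₄)}`. -/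
noncomputable def VsupQ4 (n : ℕ) (V : Eu n → ℝ → ℝ) : ℝ :=
  sSup {y | ∃ x ∈ Metric.ball (0:Eu n) 4, ∃ t ∈ Icc (0:ℝ) 16, y = |V x t|}

/-- `‖∇ₓV‖_{L^∞(Q₄)}`. -/
noncomputable def VgradSupQ4 (n : ℕ) (V : Eu n → ℝ → ℝ) : ℝ :=
  sSup {y | ∃ x ∈ Metric.ball (0:Eu n) 4, ∃ t ∈ Icc (0:ℝ) 16,
    y = ‖gradient (fun z => V z t) x‖}

/-- `‖V‖₁ = ‖V‖_{L^∞(Q₄)} + ‖∇ₓV‖_{L^∞(Q₄)}`. -/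
noncomputable def Vnorm1 (n : ℕ) (V : Eu n → ℝ → ℝ) : ℝ := VsupQ4 n V + VgradSupQ4 n V

/-- `[V]_{1/2}`, the `1/2`-Hölder seminorm of `V` in time on `Q₄`. -/
noncomputable def Vhalf (n : ℕ) (V : Eu n → ℝ → ℝ) : ℝ :=
  sSup {y | ∃ x ∈ Metric.ball (0:Eu n) 4, ∃ t ∈ Icc (0:ℝ) 16, ∃ s ∈ Icc (0:ℝ) 16,
    t ≠ s ∧ y = |V x t - V x s| / |t - s| ^ ((1:ℝ)/2)}

/-- Regularity of `V`: bounded, `C¹` in space with bounded spatial gradient,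
and uniformly `1/2`-Hölder continuous in time on `Q₄`. -/
def VReg (n : ℕ) (V : Eu n → ℝ → ℝ) : Prop :=
  (∃ C, ∀ x ∈ Metric.ball (0:Eu n) 4, ∀ t ∈ Icc (0:ℝ) 16, |V x t| ≤ C) ∧
  (∀ t ∈ Icc (0:ℝ) 16, ContDiffOn ℝ 1 (fun x => V x t) (Metric.ball (0:Eu n) 4)) ∧
  (∃ C, ∀ x ∈ Metric.ball (0:Eu n) 4, ∀ t ∈ Icc (0:ℝ) 16,
      ‖gradient (fun z => V z t) x‖ ≤ C) ∧
  (∃ C, ∀ x ∈ Metric.ball (0:Eu n) 4, ∀ t ∈ Icc (0:ℝ) 16, ∀ s ∈ Icc (0:ℝ) 16,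
      |V x t - V x s| ≤ C * |t - s| ^ ((1:ℝ)/2))

/-- `u` is a classical solution of `∂ₜu + div(A∇u) + Vu = 0` in `Q₄ = B₄ × [0,16]`:
`C²` in space, `C¹` in time, and the equation holds pointwise. -/
def IsSolQ4 (n : ℕ) (A : Eu n → ℝ → Matrix (Fin n) (Fin n) ℝ) (V u : Eu n → ℝ → ℝ) : Prop :=
  (∀ t ∈ Icc (0:ℝ) 16, ContDiffOn ℝ 2 (fun x => u x t) (Metric.ball (0:Eu n) 4)) ∧
  (∀ x ∈ Metric.ball (0:Eu n) 4, ContDiffOn ℝ 1 (fun s => u x s) (Icc (0:ℝ) 16)) ∧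
  (∀ x ∈ Metric.ball (0:Eu n) 4, ∀ t ∈ Icc (0:ℝ) 16,
      deriv (fun s => u x s) t + divAGrad n A u x t + V x t * u x t = 0)

/-- `‖V(·,0)‖_{L^∞(B₄)}`. -/
noncomputable def V0sup (n : ℕ) (V0 : Eu n → ℝ) : ℝ :=
  sSup {y | ∃ x ∈ Metric.ball (0:Eu n) 4, y = |V0 x|}

/-- `‖∇V(·,0)‖_{L^∞(B₄)}`. -/
noncomputable def V0gradSup (n : ℕ) (V0 : Eu n → ℝ) : ℝ :=
  sSup {y | ∃ x ∈ Metric.ball (0:Eu n) 4, y = ‖gradient V0 x‖}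

open scoped RealInnerProductSpace

set_option maxHeartbeats 1000000

/-- Gaussian boundary estimate: for `h ∈ C₀^∞(ℝⁿ)` and `a > 0`,
`∫ (|x|²/(8a)) h² e^{-|x|²/4a} ≤ 2a ∫ |∇h|² e^{-|x|²/4a} + (n/2) ∫ h² e^{-|x|²/4a}`. -/
theorem stmt3 (n : ℕ) (h : Eu n → ℝ) (hsm : ContDiff ℝ (⊤ : ℕ∞) h)
    (hsupp : HasCompactSupport h) (a : ℝ) (ha : 0 < a) :
    (∫ x : Eu n, ‖x‖ ^ 2 / (8 * a) * (h x) ^ 2 * Real.exp (-‖x‖ ^ 2 / (4 * a)))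
      ≤ 2 * a * (∫ x : Eu n, ‖gradient h x‖ ^ 2 * Real.exp (-‖x‖ ^ 2 / (4 * a)))
        + ((n : ℝ) / 2) * (∫ x : Eu n, (h x) ^ 2 * Real.exp (-‖x‖ ^ 2 / (4 * a))) := by
  have hdh : Differentiable ℝ h := hsm.differentiable (by simp)
  set w : Eu n → ℝ := fun x => Real.exp (-‖x‖ ^ 2 / (4 * a)) with hwdef
  set G : Eu n → Eu n := gradient h with hGdef
  change (∫ x : Eu n, ‖x‖ ^ 2 / (8 * a) * (h x) ^ 2 * w x)
      ≤ 2 * a * (∫ x : Eu n, ‖G x‖ ^ 2 * w x)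
        + ((n : ℝ) / 2) * (∫ x : Eu n, (h x) ^ 2 * w x)
  -- continuity facts
  have hcw : Continuous w := Real.continuous_exp.comp ((continuous_norm.pow 2).neg.div_const _)
  have hch : Continuous h := hsm.continuous
  have hcfd : Continuous (fderiv ℝ h) := hsm.continuous_fderiv (by simp)
  have hcG : Continuous G :=
    (InnerProductSpace.toDual ℝ (Eu n)).symm.continuous.comp hcfd
  -- vanishing outside tsupport h
  have hh0 : ∀ x ∉ tsupport h, h x = 0 := fun x hx => image_eq_zero_of_notMem_tsupport hx
  have hfd0 : ∀ x ∉ tsupport h, fderiv ℝ h x = 0 := fun x hx =>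
    Function.notMem_support.mp (fun hx' => hx (support_fderiv_subset ℝ hx'))
  have hG0 : ∀ x ∉ tsupport h, G x = 0 := fun x hx => by
    simp [hGdef, gradient, hfd0 x hx]
  -- generic integrability
  have hint : ∀ f : Eu n → ℝ, Continuous f → (∀ x ∉ tsupport h, f x = 0) → Integrable f :=
    fun f hf h0 => hf.integrable_of_hasCompactSupport (HasCompactSupport.intro hsupp h0)
  -- fderiv and gradient
  have hinner : ∀ (x v : Eu n), fderiv ℝ h x v = ⟪G x, v⟫ := by
    intro x v
    rw [hGdef]
    exact (InnerProductSpace.toDual_symm_apply).symm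
  have hinner' : ∀ (x : Eu n) (i : Fin n),
      fderiv ℝ h x (EuclideanSpace.single i 1) = G x i := by
    intro x i
    rw [hinner]
    simp [EuclideanSpace.inner_single_right]
  -- derivative of the weight
  have hw' : ∀ x : Eu n, HasFDerivAt w ((-(w x) / (2 * a)) • innerSL ℝ x) x := by
    intro x
    have h1 : HasFDerivAt (fun y : Eu n => ‖y‖ ^ 2) (2 • innerSL ℝ x) x := by
      simpa using (hasFDerivAt_id x).norm_sq
    have heqf : (fun y : Eu n => -‖y‖ ^ 2 / (4 * a)) = fun y : Eu n => -‖y‖ ^ 2 * (4 * a)⁻¹ := by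
      ext y; rw [div_eq_mul_inv]
    have h2 : HasFDerivAt (fun y : Eu n => -‖y‖ ^ 2 / (4 * a))
        ((-(1 : ℝ) / (2 * a)) • innerSL ℝ x) x := by
      rw [heqf]
      have h2' := (h1.neg).mul_const ((4 * a)⁻¹)
      refine h2'.congr_fderiv ?_
      ext v
      simp only [ContinuousLinearMap.smul_apply, ContinuousLinearMap.neg_apply, smul_eq_mul,
        nsmul_eq_mul, Nat.cast_ofNat]
      field_simp
      ring
    have h3 := h2.exp
    refine h3.congr_fderiv ?_
    ext v
    simp only [ContinuousLinearMap.smul_apply, smul_eq_mul, hwdef]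
    ring
  -- derivative of h^2
  have hsq : ∀ x : Eu n, HasFDerivAt (fun y => h y ^ 2) ((2 * h x) • fderiv ℝ h x) x := by
    intro x
    have h1 := ((hdh x).hasFDerivAt.mul (hdh x).hasFDerivAt)
    have heq : (fun y => h y * h y) = fun y => h y ^ 2 := by ext y; ring
    rw [show h * h = fun y => h y * h y from rfl, heq] at h1
    refine h1.congr_fderiv ?_
    rw [two_mul, add_smul]
  -- derivative of x i * h^2
  have hf' : ∀ (i : Fin n) (x : Eu n), HasFDerivAt (fun y : Eu n => y i * h y ^ 2)
      ((x i) • ((2 * h x) • fderiv ℝ h x)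
        + (h x ^ 2) • (EuclideanSpace.proj i : Eu n →L[ℝ] ℝ)) x := by
    intro i x
    exact (EuclideanSpace.proj (𝕜 := ℝ) i).hasFDerivAt.mul (hsq x)
  -- integration by parts in direction i
  have key_i : ∀ i : Fin n,
      ∫ x : Eu n, (x i * x i) * (h x ^ 2 * w x) * (2 * a)⁻¹
        = ∫ x : Eu n, (2 * (x i * G x i) * (h x * w x) + h x ^ 2 * w x) := by
    intro i
    have E1 := integral_bilinear_hasFDerivAt_right_eq_neg_left_of_integrable
      (μ := (volume : Measure (Eu n))) (B := ContinuousLinearMap.mul ℝ ℝ)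
      (f := fun x => x i * h x ^ 2)
      (f' := fun x => (x i) • ((2 * h x) • fderiv ℝ h x)
          + (h x ^ 2) • (EuclideanSpace.proj i : Eu n →L[ℝ] ℝ))
      (g := w)
      (g' := fun x => (-(w x) / (2 * a)) • innerSL ℝ x)
      (v := EuclideanSpace.single i 1)
      ?_ ?_ ?_ (fun x _ => hf' i x) (fun x _ => hw' x)
    · simp only [ContinuousLinearMap.mul_apply', ContinuousLinearMap.smul_apply,
        ContinuousLinearMap.add_apply, smul_eq_mul, innerSL_apply_apply,
        EuclideanSpace.inner_single_right, PiLp.proj_apply,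
        EuclideanSpace.single_apply, if_true, conj_trivial, hinner'] at E1
      calc ∫ x : Eu n, (x i * x i) * (h x ^ 2 * w x) * (2 * a)⁻¹
          = ∫ x : Eu n, -((x i * h x ^ 2) * (-(w x) / (2 * a) * (1 * x i))) := by
            apply integral_congr_ae (Filter.Eventually.of_forall fun x => ?_)
            field_simp
        _ = -∫ x : Eu n, (x i * h x ^ 2) * (-(w x) / (2 * a) * (1 * x i)) := integral_neg _
        _ = ∫ x : Eu n, (x i * (2 * h x * G x i) + h x ^ 2 * 1) * w x := by
            rw [E1, neg_neg]
        _ = ∫ x : Eu n, (2 * (x i * G x i) * (h x * w x) + h x ^ 2 * w x) := by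
            apply integral_congr_ae (Filter.Eventually.of_forall fun x => ?_)
            ring
    · -- Integrable (B (f' x v) (g x))
      simp only [ContinuousLinearMap.mul_apply', ContinuousLinearMap.smul_apply,
        ContinuousLinearMap.add_apply, smul_eq_mul, PiLp.proj_apply, hinner']
      apply hint _ ?_ (fun x hx => by simp [hh0 x hx, hG0 x hx])
      fun_prop
    · -- Integrable (B (f x) (g' x v))
      simp only [ContinuousLinearMap.mul_apply', ContinuousLinearMap.smul_apply, smul_eq_mul,
        innerSL_apply_apply, EuclideanSpace.inner_single_right, conj_trivial]
      apply hint _ ?_ (fun x hx => by simp [hh0 x hx])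
      fun_prop
    · -- Integrable (B (f x) (g x))
      simp only [ContinuousLinearMap.mul_apply']
      apply hint _ ?_ (fun x hx => by simp [hh0 x hx])
      fun_prop
  -- integrability of the families
  have intP : ∀ i : Fin n, Integrable
      (fun x : Eu n => (x i * x i) * (h x ^ 2 * w x) * (2 * a)⁻¹) := by
    intro i
    apply hint _ ?_ (fun x hx => by simp [hh0 x hx])
    fun_prop
  have intQ : ∀ i : Fin n, Integrable
      (fun x : Eu n => 2 * (x i * G x i) * (h x * w x) + h x ^ 2 * w x) := by
    intro i
    apply hint _ ?_ (fun x hx => by simp [hh0 x hx, hG0 x hx])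
    have : Continuous fun x : Eu n => G x i := (continuous_apply i).comp ((PiLp.continuous_ofLp 2 _).comp hcG)
    fun_prop
  -- sum the identities over i
  have hxx : ∀ x : Eu n, ∑ i, x i * x i = ‖x‖ ^ 2 := by
    intro x
    rw [EuclideanSpace.norm_eq, Real.sq_sqrt (by positivity)]
    simp [sq]
  have hGx : ∀ x : Eu n, ∑ i, x i * G x i = ⟪G x, x⟫ := by
    intro x
    simp [PiLp.inner_apply, mul_comm]
  have key : (∫ x : Eu n, ‖x‖ ^ 2 * (h x ^ 2 * w x) * (2 * a)⁻¹)
      = ∫ x : Eu n, (2 * ⟪G x, x⟫ * (h x * w x) + (n : ℝ) * (h x ^ 2 * w x)) := by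
    have S1 : ∫ x : Eu n, (∑ i, (x i * x i) * (h x ^ 2 * w x) * (2 * a)⁻¹)
        = ∑ i, ∫ x : Eu n, (x i * x i) * (h x ^ 2 * w x) * (2 * a)⁻¹ :=
      integral_finset_sum _ (fun i _ => intP i)
    have S2 : ∫ x : Eu n, (∑ i, (2 * (x i * G x i) * (h x * w x) + h x ^ 2 * w x))
        = ∑ i, ∫ x : Eu n, (2 * (x i * G x i) * (h x * w x) + h x ^ 2 * w x) :=
      integral_finset_sum _ (fun i _ => intQ i)
    calc ∫ x : Eu n, ‖x‖ ^ 2 * (h x ^ 2 * w x) * (2 * a)⁻¹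
        = ∫ x : Eu n, (∑ i, (x i * x i) * (h x ^ 2 * w x) * (2 * a)⁻¹) := by
          apply integral_congr_ae (Filter.Eventually.of_forall fun x => ?_)
          rw [← hxx x, Finset.sum_mul, Finset.sum_mul]
      _ = ∑ i, ∫ x : Eu n, (x i * x i) * (h x ^ 2 * w x) * (2 * a)⁻¹ := S1
      _ = ∑ i, ∫ x : Eu n, (2 * (x i * G x i) * (h x * w x) + h x ^ 2 * w x) := by
          exact Finset.sum_congr rfl fun i _ => key_i i
      _ = ∫ x : Eu n, (∑ i, (2 * (x i * G x i) * (h x * w x) + h x ^ 2 * w x)) := S2.symm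
      _ = ∫ x : Eu n, (2 * ⟪G x, x⟫ * (h x * w x) + (n : ℝ) * (h x ^ 2 * w x)) := by
          apply integral_congr_ae (Filter.Eventually.of_forall fun x => ?_)
          rw [Finset.sum_add_distrib, Finset.sum_const, Finset.card_univ, Fintype.card_fin,
            nsmul_eq_mul]
          congr 1
          rw [← hGx x, Finset.mul_sum, Finset.sum_mul]
  -- the AM-GM inequality
  have amgm : ∀ u v : ℝ, 2 * (u * v) ≤ u ^ 2 * (4 * a)⁻¹ + 4 * a * v ^ 2 := by
    intro u v
    rw [← sub_nonneg]
    have hq : u ^ 2 * (4 * a)⁻¹ + 4 * a * v ^ 2 - 2 * (u * v)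
        = (u - 4 * a * v) ^ 2 / (4 * a) := by
      field_simp
      ring
    rw [hq]
    positivity
  -- pointwise bound
  have hpt : ∀ x : Eu n, 2 * ⟪G x, x⟫ * (h x * w x)
      ≤ (‖x‖ ^ 2 * (h x ^ 2 * w x) * (4 * a)⁻¹ + 4 * a * (‖G x‖ ^ 2 * w x)) := by
    intro x
    have hw0 : 0 ≤ w x := Real.exp_nonneg _
    have hcs : 2 * ⟪G x, x⟫ * h x ≤ 2 * ((‖x‖ * |h x|) * ‖G x‖) := by
      calc 2 * ⟪G x, x⟫ * h x ≤ |2 * ⟪G x, x⟫ * h x| := le_abs_self _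
        _ = 2 * |⟪G x, x⟫| * |h x| := by
            rw [abs_mul, abs_mul]; simp
        _ ≤ 2 * (‖G x‖ * ‖x‖) * |h x| := by
            have := abs_real_inner_le_norm (G x) x
            have h0 : (0:ℝ) ≤ |h x| := abs_nonneg _
            nlinarith
        _ = 2 * ((‖x‖ * |h x|) * ‖G x‖) := by ring
    have hA := amgm (‖x‖ * |h x|) ‖G x‖
    have hsq' : (‖x‖ * |h x|) ^ 2 = ‖x‖ ^ 2 * h x ^ 2 := by
      rw [mul_pow, sq_abs]
    have hmain : 2 * ⟪G x, x⟫ * h x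
        ≤ ‖x‖ ^ 2 * h x ^ 2 * (4 * a)⁻¹ + 4 * a * ‖G x‖ ^ 2 := by
      calc 2 * ⟪G x, x⟫ * h x ≤ 2 * ((‖x‖ * |h x|) * ‖G x‖) := hcs
        _ ≤ (‖x‖ * |h x|) ^ 2 * (4 * a)⁻¹ + 4 * a * ‖G x‖ ^ 2 := hA
        _ = ‖x‖ ^ 2 * h x ^ 2 * (4 * a)⁻¹ + 4 * a * ‖G x‖ ^ 2 := by rw [hsq']
    calc 2 * ⟪G x, x⟫ * (h x * w x) = (2 * ⟪G x, x⟫ * h x) * w x := by ring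
      _ ≤ (‖x‖ ^ 2 * h x ^ 2 * (4 * a)⁻¹ + 4 * a * ‖G x‖ ^ 2) * w x :=
          mul_le_mul_of_nonneg_right hmain hw0
      _ = ‖x‖ ^ 2 * (h x ^ 2 * w x) * (4 * a)⁻¹ + 4 * a * (‖G x‖ ^ 2 * w x) := by ring
  -- integrability of all remaining integrands
  have intL : Integrable (fun x : Eu n => 2 * ⟪G x, x⟫ * (h x * w x)) := by
    apply hint _ ?_ (fun x hx => by simp [hh0 x hx])
    have : Continuous fun x : Eu n => ⟪G x, x⟫ := hcG.inner continuous_id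
    fun_prop
  have intH : Integrable (fun x : Eu n => h x ^ 2 * w x) := by
    apply hint _ ?_ (fun x hx => by simp [hh0 x hx])
    fun_prop
  have intX : Integrable (fun x : Eu n => ‖x‖ ^ 2 * (h x ^ 2 * w x) * (4 * a)⁻¹) := by
    apply hint _ ?_ (fun x hx => by simp [hh0 x hx])
    fun_prop
  have intG : Integrable (fun x : Eu n => 4 * a * (‖G x‖ ^ 2 * w x)) := by
    apply hint _ ?_ (fun x hx => by simp [hG0 x hx])
    fun_prop
  -- main inequality between integrals
  have hIneq : (∫ x : Eu n, ‖x‖ ^ 2 * (h x ^ 2 * w x) * (2 * a)⁻¹)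
      ≤ (∫ x : Eu n, ‖x‖ ^ 2 * (h x ^ 2 * w x) * (4 * a)⁻¹)
        + (4 * a * ∫ x : Eu n, ‖G x‖ ^ 2 * w x)
        + (n : ℝ) * ∫ x : Eu n, h x ^ 2 * w x := by
    rw [key]
    rw [integral_add intL (intH.const_mul _), integral_const_mul]
    have step : ∫ x : Eu n, 2 * ⟪G x, x⟫ * (h x * w x)
        ≤ ∫ x : Eu n, (‖x‖ ^ 2 * (h x ^ 2 * w x) * (4 * a)⁻¹ + 4 * a * (‖G x‖ ^ 2 * w x)) :=
      integral_mono intL (intX.add intG) hpt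
    rw [integral_add intX intG, integral_const_mul] at step
    linarith
  -- convert to scalar quantities
  set IL := ∫ x : Eu n, ‖x‖ ^ 2 * (h x ^ 2 * w x) with hIL
  set IG := ∫ x : Eu n, ‖G x‖ ^ 2 * w x with hIG
  set IH := ∫ x : Eu n, h x ^ 2 * w x with hIH
  have intXL : Integrable (fun x : Eu n => ‖x‖ ^ 2 * (h x ^ 2 * w x)) := by
    apply hint _ ?_ (fun x hx => by simp [hh0 x hx])
    fun_prop
  have e2 : (∫ x : Eu n, ‖x‖ ^ 2 * (h x ^ 2 * w x) * (2 * a)⁻¹) = IL * (2 * a)⁻¹ := by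
    rw [hIL]; exact integral_mul_const _ _
  have e4 : (∫ x : Eu n, ‖x‖ ^ 2 * (h x ^ 2 * w x) * (4 * a)⁻¹) = IL * (4 * a)⁻¹ := by
    rw [hIL]; exact integral_mul_const _ _
  rw [e2, e4] at hIneq
  -- identify the goal integrals
  have gLHS : (∫ x : Eu n, ‖x‖ ^ 2 / (8 * a) * h x ^ 2 * w x) = IL * (8 * a)⁻¹ := by
    rw [hIL, ← integral_mul_const _ (fun x : Eu n => ‖x‖ ^ 2 * (h x ^ 2 * w x))]
    apply integral_congr_ae (Filter.Eventually.of_forall fun x => ?_)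
    field_simp
  have gG : (∫ x : Eu n, ‖G x‖ ^ 2 * w x) = IG := rfl
  rw [gLHS]
  -- final arithmetic
  have ha2 : (0:ℝ) < 2 * a := by linarith
  have ha4 : (0:ℝ) < 4 * a := by linarith
  have ha8 : (0:ℝ) < 8 * a := by linarith
  have hinv2 : (2 * a)⁻¹ = 2 * (4 * a)⁻¹ := by
    field_simp
    ring
  have hinv8 : (8 * a)⁻¹ = (4 * a)⁻¹ / 2 := by
    have ha0 : a ≠ 0 := ne_of_gt ha
    field_simp
    ring
  rw [hinv2] at hIneq
  rw [hinv8]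
  nlinarith [hIneq, inv_pos.mpr ha4]
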